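/- Let W be a k-wheel and let d : [1,k] → {1,2} be a nonconstant function. Then there exist exactly two coupled spanning trees T of W such that for every spoke v_i, the number of edges of T incident to v_i equals d(i). -/

import Mathlib

set_option linter.unusedSectionVars false

/-- The edge set of the `k`-wheel: center `none`, spokes `some i`, `i : ZMod k`. -/
def wheelEdges (k : ℕ) : Set (Sym2 (Option (ZMod k))) :=
  {e | ∃ i : ZMod k, e = s(none, some i) ∨ e = s(some i, some (i + 1))}

/-- `T` is a coupled spanning tree of the `k`-wheel. -/
def IsCoupledTree (k : ℕ) (T : Set (Sym2 (Option (ZMod k)))) : Prop :=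
  T ⊆ wheelEdges k ∧ (SimpleGraph.fromEdgeSet T).IsTree ∧
    (SimpleGraph.fromEdgeSet (wheelEdges k \ T)).IsTree

/-- The valence of a vertex `x` with respect to an edge set `T`: the number of
edges of `T` incident to `x`. -/
noncomputable def valOf {k : ℕ} (T : Set (Sym2 (Option (ZMod k))))
    (x : Option (ZMod k)) : ℕ :=
  {e ∈ T | x ∈ e}.ncard

namespace Wheel

open SimpleGraph

variable {k : ℕ}

/-- spoke edge -/
def spk (k : ℕ) (i : ZMod k) : Sym2 (Option (ZMod k)) := s(none, some i)

/-- rim edge -/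
def rim (k : ℕ) (i : ZMod k) : Sym2 (Option (ZMod k)) := s(some i, some (i + 1))

open Classical in
/-- classical indicator -/
noncomputable def cif (P : Prop) : ℕ := if P then 1 else 0

lemma cif_pos {P : Prop} (h : P) : cif P = 1 := by rw [cif, if_pos h]

lemma cif_neg {P : Prop} (h : ¬ P) : cif P = 0 := by rw [cif, if_neg h]

lemma cif_le_one (P : Prop) : cif P ≤ 1 := by
  by_cases h : P
  · rw [cif_pos h]
  · rw [cif_neg h]; omega

lemma cif_cases (P : Prop) : (cif P = 1 ∧ P) ∨ (cif P = 0 ∧ ¬ P) := by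
  by_cases h : P
  · exact Or.inl ⟨cif_pos h, h⟩
  · exact Or.inr ⟨cif_neg h, h⟩

lemma cif_eq_one_iff {P : Prop} : cif P = 1 ↔ P := by
  rcases cif_cases P with ⟨h1, h2⟩ | ⟨h1, h2⟩ <;> rw [h1] <;> simp [h2]

lemma cif_eq_zero_iff {P : Prop} : cif P = 0 ↔ ¬ P := by
  rcases cif_cases P with ⟨h1, h2⟩ | ⟨h1, h2⟩ <;> rw [h1] <;> simp [h2]

section basic

variable (hk : 3 ≤ k)
include hk

lemma one_ne_zero' : (1 : ZMod k) ≠ 0 := by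
  intro h
  have : ((1:ℕ) : ZMod k) = 0 := by exact_mod_cast h
  have := Nat.le_of_dvd one_pos ((ZMod.natCast_eq_zero_iff 1 k).mp this)
  omega

lemma two_ne_zero' : (2 : ZMod k) ≠ 0 := by
  intro h
  have : ((2:ℕ) : ZMod k) = 0 := by exact_mod_cast h
  have := Nat.le_of_dvd two_pos ((ZMod.natCast_eq_zero_iff 2 k).mp this)
  omega

lemma succ_ne (i : ZMod k) : i + 1 ≠ i := by
  intro h
  have : (1 : ZMod k) = 0 := by linear_combination h - i
  exact one_ne_zero' hk this

omit hk in
lemma spk_inj {i j : ZMod k} (h : spk k i = spk k j) : i = j := by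
  simp only [spk, Sym2.eq_iff] at h
  rcases h with ⟨-, h⟩ | ⟨h, -⟩ <;> simp_all

lemma rim_inj {i j : ZMod k} (h : rim k i = rim k j) : i = j := by
  simp only [rim, Sym2.eq_iff, Option.some_inj] at h
  rcases h with ⟨h, -⟩ | ⟨h1, h2⟩
  · exact h
  · exfalso
    have : (2 : ZMod k) = 0 := by linear_combination h2 - h1
    exact two_ne_zero' hk this

omit hk in
lemma spk_ne_rim (i j : ZMod k) : spk k i ≠ rim k j := by
  simp [spk, rim, Sym2.eq_iff]

omit hk in
lemma spk_mem_wheel (i : ZMod k) : spk k i ∈ wheelEdges k := ⟨i, Or.inl rfl⟩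

omit hk in
lemma rim_mem_wheel (i : ZMod k) : rim k i ∈ wheelEdges k := ⟨i, Or.inr rfl⟩

/-- classification of wheel edges through `some i` -/
lemma classify {e : Sym2 (Option (ZMod k))} (he : e ∈ wheelEdges k) {i : ZMod k}
    (hi : some i ∈ e) : e = spk k i ∨ e = rim k (i - 1) ∨ e = rim k i := by
  obtain ⟨j, hj | hj⟩ := he
  · subst hj
    rw [Sym2.mem_iff] at hi
    rcases hi with hi | hi
    · exact absurd hi (by simp)
    · left; rw [Option.some_inj] at hi; rw [hi]; rfl
  · subst hj
    rw [Sym2.mem_iff] at hi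
    rcases hi with hi | hi <;> rw [Option.some_inj] at hi
    · right; right; subst hi; rfl
    · right; left
      have hj : j = i - 1 := by rw [hi]; ring
      subst hj; rfl

/-- second endpoint of a rim edge, from the left -/
lemma rim_other {i : ZMod k} {u v : Option (ZMod k)} (h : s(u, v) = rim k i)
    (hu : u = some i) : v = some (i + 1) := by
  rw [rim, Sym2.eq_iff] at h
  rcases h with ⟨-, h⟩ | ⟨h1, h2⟩
  · exact h
  · exfalso; rw [hu] at h1
    simp only [Option.some_inj] at h1
    exact succ_ne hk i h1.symm

/-- second endpoint of a rim edge, from the right -/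
lemma rim_other' {i : ZMod k} {u v : Option (ZMod k)} (h : s(u, v) = rim k i)
    (hu : u = some (i + 1)) : v = some i := by
  rw [rim, Sym2.eq_iff] at h
  rcases h with ⟨h1, -⟩ | ⟨-, h⟩
  · exfalso; rw [hu] at h1
    simp only [Option.some_inj] at h1
    exact succ_ne hk i h1
  · exact h

end basic

section layer2

variable (hk : 3 ≤ k)
include hk

lemma rim_ne_rim_sub_one (i : ZMod k) : rim k (i - 1) ≠ rim k i := by
  intro h
  have := rim_inj hk h
  have h1 : (1 : ZMod k) = 0 := by linear_combination - this
  exact one_ne_zero' hk h1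

lemma val_decomp {T : Set (Sym2 (Option (ZMod k)))} (hsub : T ⊆ wheelEdges k) (i : ZMod k) :
    valOf T (some i) = cif (spk k i ∈ T) + cif (rim k (i - 1) ∈ T) + cif (rim k i ∈ T) := by
  classical
  have hset : {e ∈ T | some i ∈ e} = (T ∩ {spk k i}) ∪ (T ∩ {rim k (i - 1)}) ∪ (T ∩ {rim k i}) := by
    ext e
    simp only [Set.mem_setOf_eq, Set.mem_union, Set.mem_inter_iff, Set.mem_singleton_iff]
    constructor
    · rintro ⟨heT, hei⟩
      rcases classify hk (hsub heT) hei with h | h | h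
      · exact Or.inl (Or.inl ⟨heT, h⟩)
      · exact Or.inl (Or.inr ⟨heT, h⟩)
      · exact Or.inr ⟨heT, h⟩
    · rintro ((⟨h1, h2⟩ | ⟨h1, h2⟩) | ⟨h1, h2⟩) <;> subst h2 <;> refine ⟨h1, ?_⟩
      · exact Sym2.mem_mk_right _ _
      · have h3 : i - 1 + 1 = i := by ring
        rw [rim, h3]
        exact Sym2.mem_mk_right _ _
      · exact Sym2.mem_mk_left _ _
  have hone : ∀ a : Sym2 (Option (ZMod k)), (T ∩ {a}).ncard = cif (a ∈ T) := by
    intro a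
    by_cases h : a ∈ T
    · rw [cif_pos h, Set.inter_eq_right.mpr (Set.singleton_subset_iff.mpr h), Set.ncard_singleton]
    · rw [cif_neg h, Set.inter_singleton_eq_empty.mpr h, Set.ncard_empty]
  have hfin : ∀ a : Sym2 (Option (ZMod k)), (T ∩ {a}).Finite := by
    intro a
    exact Set.Finite.subset (Set.finite_singleton a) Set.inter_subset_right
  have hdisj : ∀ a b : Sym2 (Option (ZMod k)), a ≠ b → Disjoint (T ∩ {a}) (T ∩ {b}) := by
    intro a b hab
    rw [Set.disjoint_left]
    rintro x ⟨-, rfl⟩ ⟨-, h⟩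
    exact hab h
  rw [valOf, hset, Set.ncard_union_eq ?d1 ((hfin _).union (hfin _)) (hfin _),
    Set.ncard_union_eq ?d2 (hfin _) (hfin _), hone, hone, hone]
  case d1 =>
    refine Disjoint.union_left ?_ ?_
    · exact hdisj _ _ (spk_ne_rim i i)
    · exact hdisj _ _ (rim_ne_rim_sub_one hk i)
  case d2 => exact hdisj _ _ (spk_ne_rim i (i - 1))

/-- disconnection lemma -/
lemma disc {T : Set (Sym2 (Option (ZMod k)))}
    (hconn : (SimpleGraph.fromEdgeSet T).Connected) (A : Set (Option (ZMod k)))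
    (x : Option (ZMod k)) (hx : x ∈ A) (hnone : (none : Option (ZMod k)) ∉ A)
    (hclosed : ∀ e ∈ T, ∀ u v : Option (ZMod k), e = s(u, v) → u ∈ A → v ∈ A) : False := by
  obtain ⟨p⟩ := hconn x none
  obtain ⟨D, -, hD1, hD2⟩ := p.exists_boundary_dart A hx hnone
  have hadj := D.adj
  rw [SimpleGraph.fromEdgeSet_adj] at hadj
  exact hD2 (hclosed _ hadj.1 D.fst D.snd rfl hD1)

/-- isolated run contradiction -/
lemma pathContra {T : Set (Sym2 (Option (ZMod k)))} (hsub : T ⊆ wheelEdges k)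
    (hconn : (SimpleGraph.fromEdgeSet T).Connected) (t : ZMod k) (n : ℕ)
    (hs : ∀ m : ℕ, m ≤ n + 1 → spk k (t + m) ∉ T)
    (hl : rim k (t - 1) ∉ T) (hrr : rim k (t + (n + 1 : ℕ)) ∉ T) : False := by
  refine disc hk hconn {x | ∃ m : ℕ, m ≤ n + 1 ∧ x = some (t + m)} (some t)
    ⟨0, by omega, by norm_num⟩ (by rintro ⟨m, -, h⟩; exact nomatch h) ?_
  rintro e heT u v rfl ⟨m, hm, rfl⟩
  have hmem : some (t + (m : ZMod k)) ∈ s(some (t + (m : ZMod k)), v) := Sym2.mem_mk_left _ _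
  rcases classify hk (hsub heT) hmem with h | h | h
  · exact absurd heT (h ▸ hs m hm)
  · -- e = rim (t + m - 1)
    rcases m with _ | m'
    · exfalso
      have hidx : t + ((0:ℕ) : ZMod k) - 1 = t - 1 := by push_cast; ring
      rw [hidx] at h
      exact hl (h ▸ heT)
    · have hmeq : (t + ((m' + 1 : ℕ) : ZMod k)) - 1 = t + (m' : ℕ) := by push_cast; ring
      rw [hmeq] at h
      have hv : v = some (t + (m' : ℕ)) := by
        refine rim_other' hk h ?_
        congr 1
        push_cast
        ring
      exact ⟨m', by omega, hv⟩
  · -- e = rim (t + m)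
    rcases eq_or_lt_of_le hm with hm' | hm'
    · exfalso
      subst hm'
      exact hrr (h ▸ heT)
    · have hv : v = some (t + ((m + 1 : ℕ) : ZMod k)) := by
        have := rim_other hk h rfl
        rw [this]
        congr 1
        push_cast
        ring
      exact ⟨m + 1, by omega, hv⟩

end layer2

/-- All the hypotheses needed for the uniqueness direction. -/
structure Sol (k : ℕ) (T : Set (Sym2 (Option (ZMod k)))) (d : ZMod k → ℕ) : Prop where
  sub : T ⊆ wheelEdges k
  conn : (SimpleGraph.fromEdgeSet T).Connected
  conn' : (SimpleGraph.fromEdgeSet (wheelEdges k \ T)).Connected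
  vals : ∀ i, d i = 1 ∨ d i = 2
  deg : ∀ i, cif (spk k i ∈ T) + cif (rim k (i - 1) ∈ T) + cif (rim k i ∈ T) = d i

section layer3

variable (hk : 3 ≤ k) {T : Set (Sym2 (Option (ZMod k)))} {d : ZMod k → ℕ}
include hk

lemma cif_diff {e : Sym2 (Option (ZMod k))} (hmem : e ∈ wheelEdges k)
    (T : Set (Sym2 (Option (ZMod k)))) : cif (e ∈ wheelEdges k \ T) = 1 - cif (e ∈ T) := by
  by_cases h : e ∈ T
  · rw [cif_pos h, cif_neg (fun hc => hc.2 h)]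
  · rw [cif_neg h, cif_pos ⟨hmem, h⟩]

lemma Sol.compl (hS : Sol k T d) : Sol k (wheelEdges k \ T) (fun i => 3 - d i) where
  sub := Set.diff_subset
  conn := hS.conn'
  conn' := by rw [Set.diff_diff_cancel_left hS.sub]; exact hS.conn
  vals := fun i => by rcases hS.vals i with h | h <;> simp [h]
  deg := fun i => by
    rw [cif_diff hk (spk_mem_wheel i), cif_diff hk (rim_mem_wheel (i - 1)),
      cif_diff hk (rim_mem_wheel i)]
    have h := hS.deg i
    have l1 := cif_le_one (spk k i ∈ T)
    have l2 := cif_le_one (rim k (i - 1) ∈ T)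
    have l3 := cif_le_one (rim k i ∈ T)
    omega

lemma N2core (hS : Sol k T d) (i : ZMod k) (h1 : d i = 1) (h2 : d (i + 1) = 1)
    (hrim : rim k i ∈ T) : False := by
  have e1 := hS.deg i
  have e2 := hS.deg (i + 1)
  have hsimp : i + 1 - 1 = i := by ring
  rw [hsimp] at e2
  rw [h1, cif_pos hrim] at e1
  rw [h2, cif_pos hrim] at e2
  have l1 := cif_le_one (spk k i ∈ T)
  have l2 := cif_le_one (rim k (i - 1) ∈ T)
  have l3 := cif_le_one (spk k (i + 1) ∈ T)
  have l4 := cif_le_one (rim k (i + 1) ∈ T)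
  have m1 : spk k i ∉ T := cif_eq_zero_iff.mp (by omega)
  have m2 : rim k (i - 1) ∉ T := cif_eq_zero_iff.mp (by omega)
  have m3 : spk k (i + 1) ∉ T := cif_eq_zero_iff.mp (by omega)
  have m4 : rim k (i + 1) ∉ T := cif_eq_zero_iff.mp (by omega)
  refine pathContra hk hS.sub hS.conn i 0 ?_ m2 ?_
  · intro m hm
    interval_cases m
    · simpa using m1
    · simpa using m3
  · simpa using m4

lemma N2 (hS : Sol k T d) {i : ZMod k} (h : d i = d (i + 1)) : rim k i ∈ T ↔ d i = 2 := by
  constructor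
  · intro hr
    by_contra h2
    have h1 : d i = 1 := by rcases hS.vals i with hv | hv <;> omega
    exact N2core hk hS i h1 (h ▸ h1) hr
  · intro h2
    by_contra hr
    refine N2core hk (hS.compl hk) i (by simp [h2]) (by simp [← h, h2]) ⟨rim_mem_wheel i, hr⟩

lemma altcore (hS : Sol k T d) (t : ZMod k) (n : ℕ) (h0 : d t = 1)
    (hmid : ∀ m : ℕ, 1 ≤ m → m ≤ n → d (t + m) = 2) (hend : d (t + ((n + 1 : ℕ) : ZMod k)) = 1)
    (hr0 : rim k t ∈ T) (hrn : rim k (t + (n : ℕ)) ∈ T) : False := by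
  have hrim : ∀ m : ℕ, m ≤ n → rim k (t + m) ∈ T := by
    intro m hm
    rcases Nat.eq_zero_or_pos m with rfl | hm1
    · simpa using hr0
    rcases eq_or_lt_of_le hm with rfl | hm2
    · exact hrn
    have hc : d (t + m) = d (t + m + 1) := by
      have ha := hmid m hm1 hm
      have hb := hmid (m + 1) (by omega) (by omega)
      rw [ha]
      rw [show t + (m : ZMod k) + 1 = t + ((m + 1 : ℕ) : ZMod k) by push_cast; ring, hb]
    rw [N2 hk hS hc]
    exact hmid m hm1 hm
  -- facts at vertex t
  have e0 := hS.deg t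
  rw [h0, cif_pos hr0] at e0
  have l1 := cif_le_one (spk k t ∈ T)
  have l2 := cif_le_one (rim k (t - 1) ∈ T)
  have ms0 : spk k t ∉ T := cif_eq_zero_iff.mp (by omega)
  have ml : rim k (t - 1) ∉ T := cif_eq_zero_iff.mp (by omega)
  -- facts at vertex t + n + 1
  have eE := hS.deg (t + ((n + 1 : ℕ) : ZMod k))
  rw [hend] at eE
  rw [show t + ((n + 1 : ℕ) : ZMod k) - 1 = t + (n : ℕ) by push_cast; ring] at eE
  rw [cif_pos hrn] at eE
  have l3 := cif_le_one (spk k (t + ((n + 1 : ℕ) : ZMod k)) ∈ T)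
  have l4 := cif_le_one (rim k (t + ((n + 1 : ℕ) : ZMod k)) ∈ T)
  have msE : spk k (t + ((n + 1 : ℕ) : ZMod k)) ∉ T := cif_eq_zero_iff.mp (by omega)
  have mrE : rim k (t + ((n + 1 : ℕ) : ZMod k)) ∉ T := cif_eq_zero_iff.mp (by omega)
  -- spokes in the middle
  have hspk : ∀ m : ℕ, m ≤ n + 1 → spk k (t + m) ∉ T := by
    intro m hm
    rcases Nat.eq_zero_or_pos m with rfl | hm1
    · simpa using ms0
    rcases eq_or_lt_of_le hm with rfl | hm2
    · exact msE
    have em := hS.deg (t + (m : ℕ))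
    rw [hmid m hm1 (by omega)] at em
    have hr1 : rim k (t + (m : ℕ) - 1) ∈ T := by
      rw [show t + (m : ZMod k) - 1 = t + ((m - 1 : ℕ) : ZMod k) by
        rcases m with _ | m'
        · omega
        · push_cast; ring]
      exact hrim (m - 1) (by omega)
    have hr2 : rim k (t + (m : ℕ)) ∈ T := hrim m (by omega)
    rw [cif_pos hr1, cif_pos hr2] at em
    exact cif_eq_zero_iff.mp (by omega)
  exact pathContra hk hS.sub hS.conn t n hspk ml mrE

lemma altB (hS : Sol k T d) (t : ZMod k) (n : ℕ) (hn : 1 ≤ n)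
    (htr : d t ≠ d (t + 1))
    (hblock : ∀ m : ℕ, 1 ≤ m → m < n → d (t + (m : ℕ)) = d (t + ((m + 1 : ℕ) : ZMod k)))
    (htr' : d (t + (n : ℕ)) ≠ d (t + ((n + 1 : ℕ) : ZMod k)))
    (hBt : rim k t ∈ T ↔ d (t + 1) = 2) :
    rim k (t + (n : ℕ)) ∈ T ↔ d (t + ((n + 1 : ℕ) : ZMod k)) = 2 := by
  have hconst : ∀ m : ℕ, 1 ≤ m → m ≤ n → d (t + (m : ℕ)) = d (t + 1) := by
    intro m
    induction m with
    | zero => omega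
    | succ m' ih =>
      intro _ hm
      rcases Nat.eq_zero_or_pos m' with rfl | hp
      · norm_num
      · rw [← hblock m' hp (by omega)]
        exact ih hp (by omega)
  by_contra hgoal
  have hv1 := hS.vals (t + (n : ℕ))
  have hv2 := hS.vals (t + ((n + 1 : ℕ) : ZMod k))
  have hiff : d (t + (n : ℕ)) = 2 ↔ ¬ (d (t + ((n + 1 : ℕ) : ZMod k)) = 2) := by
    constructor <;> intro <;> omega
  have hAn : rim k (t + (n : ℕ)) ∈ T ↔ d (t + (n : ℕ)) = 2 := by
    rw [hiff]; tauto
  have hdn : d (t + (n : ℕ)) = d (t + 1) := hconst n hn le_rfl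
  rcases hS.vals (t + 1) with hc | hc
  · -- block value 1 : apply altcore to the complement
    have h0' : (fun i => 3 - d i) t = 1 := by
      have := hS.vals t
      show 3 - d t = 1
      omega
    refine altcore hk (hS.compl hk) t n h0' ?_ ?_ ?_ ?_
    · intro m h1 h2
      have := hconst m h1 h2
      show 3 - d (t + (m : ℕ)) = 2
      omega
    · show 3 - d (t + ((n + 1 : ℕ) : ZMod k)) = 1
      omega
    · exact ⟨rim_mem_wheel t, fun h => by rw [hBt] at h; omega⟩
    · exact ⟨rim_mem_wheel _, fun h => by rw [hAn] at h; omega⟩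
  · -- block value 2 : apply altcore directly
    have h0 : d t = 1 := by
      have := hS.vals t
      omega
    refine altcore hk hS t n h0 ?_ ?_ ?_ ?_
    · intro m h1 h2
      rw [hconst m h1 h2, hc]
    · have := hS.vals (t + ((n + 1 : ℕ) : ZMod k))
      omega
    · rw [hBt, hc]
    · rw [hAn]
      omega

lemma propag (hS : Sol k T d) (a : ZMod k) (hta : d a ≠ d (a + 1))
    (hBa : rim k a ∈ T ↔ d (a + 1) = 2) :
    ∀ n : ℕ, d (a + (n : ℕ)) ≠ d (a + ((n + 1 : ℕ) : ZMod k)) →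
      (rim k (a + (n : ℕ)) ∈ T ↔ d (a + ((n + 1 : ℕ) : ZMod k)) = 2) := by
  intro n
  induction n using Nat.strong_induction_on with
  | _ n ih =>
    intro htn
    rcases Nat.eq_zero_or_pos n with rfl | hn
    · simpa using hBa
    classical
    set P : ℕ → Prop := fun m => d (a + (m : ℕ)) ≠ d (a + ((m + 1 : ℕ) : ZMod k)) with hPdef
    set M := Nat.findGreatest P (n - 1) with hMdef
    have hP0 : P 0 := by simpa [hPdef] using hta
    have hPM : P M := Nat.findGreatest_spec (Nat.zero_le (n - 1)) hP0
    have hMle : M ≤ n - 1 := Nat.findGreatest_le (n - 1)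
    have hmax : ∀ j, M < j → j ≤ n - 1 → ¬ P j := fun j h1 h2 =>
      Nat.findGreatest_is_greatest h1 h2
    have hBM := ih M (by omega) hPM
    have key := altB hk hS (a + (M : ℕ)) (n - M) (by omega) ?_ ?_ ?_ ?_
    · have e1 : a + ((M : ℕ) : ZMod k) + ((n - M : ℕ) : ZMod k) = a + (n : ℕ) := by
        rw [Nat.cast_sub (by omega)]
        ring
      have e2 : a + ((M : ℕ) : ZMod k) + ((n - M + 1 : ℕ) : ZMod k)
          = a + ((n + 1 : ℕ) : ZMod k) := by
        rw [Nat.cast_add, Nat.cast_sub (by omega)]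
        push_cast
        ring
      rw [e1, e2] at key
      exact key
    · -- transition at a + M
      have e3 : a + ((M : ℕ) : ZMod k) + 1 = a + ((M + 1 : ℕ) : ZMod k) := by
        push_cast; ring
      rw [e3]
      exact hPM
    · intro m h1 h2
      have hnp : ¬ P (M + m) := hmax (M + m) (by omega) (by omega)
      rw [hPdef] at hnp
      replace hnp := not_ne_iff.mp hnp
      have e4 : a + ((M : ℕ) : ZMod k) + ((m : ℕ) : ZMod k) = a + ((M + m : ℕ) : ZMod k) := by
        push_cast; ring
      have e5 : a + ((M : ℕ) : ZMod k) + ((m + 1 : ℕ) : ZMod k)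
          = a + ((M + m + 1 : ℕ) : ZMod k) := by
        push_cast; ring
      rw [e4, e5]
      exact hnp
    · have e1 : a + ((M : ℕ) : ZMod k) + ((n - M : ℕ) : ZMod k) = a + (n : ℕ) := by
        rw [Nat.cast_sub (by omega)]
        ring
      have e2 : a + ((M : ℕ) : ZMod k) + ((n - M + 1 : ℕ) : ZMod k)
          = a + ((n + 1 : ℕ) : ZMod k) := by
        rw [Nat.cast_add, Nat.cast_sub (by omega)]
        push_cast
        ring
      rw [e1, e2]
      exact htn
    · have e3 : a + ((M : ℕ) : ZMod k) + 1 = a + ((M + 1 : ℕ) : ZMod k) := by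
        push_cast; ring
      rw [e3]
      exact hBM

lemma unique (hS : Sol k T d) :
    (∀ i, rim k i ∈ T ↔ d i = 2) ∨ (∀ i, rim k i ∈ T ↔ d (i + 1) = 2) := by
  haveI : NeZero k := ⟨by omega⟩
  by_cases hA : ∀ i, rim k i ∈ T ↔ d i = 2
  · exact Or.inl hA
  obtain ⟨a, ha⟩ := not_forall.mp hA
  have hta : d a ≠ d (a + 1) := fun h => ha (N2 hk hS h)
  have hBa : rim k a ∈ T ↔ d (a + 1) = 2 := by
    have hv1 := hS.vals a
    have hv2 := hS.vals (a + 1)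
    have h2 : d (a + 1) = 2 ↔ ¬ (d a = 2) := by constructor <;> intro <;> omega
    rw [h2]
    tauto
  right
  intro i
  by_cases hti : d i = d (i + 1)
  · rw [N2 hk hS hti, hti]
  · have hval : ((( i - a).val : ℕ) : ZMod k) = i - a := ZMod.natCast_rightInverse (i - a)
    have hin : i = a + (((i - a).val : ℕ) : ZMod k) := by rw [hval]; ring
    have hin1 : i + 1 = a + ((((i - a).val + 1 : ℕ)) : ZMod k) := by
      push_cast
      rw [hval]
      ring
    have := propag hk hS a hta hBa ((i - a).val) (by rw [← hin, ← hin1]; exact hti)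
    rw [← hin, ← hin1] at this
    exact this

end layer3

/-- first candidate tree -/
def treeA (k : ℕ) (d : ZMod k → ℕ) : Set (Sym2 (Option (ZMod k))) :=
  {e | ∃ i : ZMod k, (e = spk k i ∧ d (i - 1) = 1) ∨ (e = rim k i ∧ d i = 2)}

/-- second candidate tree -/
def treeB (k : ℕ) (d : ZMod k → ℕ) : Set (Sym2 (Option (ZMod k))) :=
  {e | ∃ i : ZMod k, (e = spk k i ∧ d (i + 1) = 1) ∨ (e = rim k i ∧ d (i + 1) = 2)}

section layer4

variable (hk : 3 ≤ k) {d : ZMod k → ℕ}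
include hk

omit hk in
lemma treeA_sub : treeA k d ⊆ wheelEdges k := by
  rintro e ⟨i, ⟨rfl, -⟩ | ⟨rfl, -⟩⟩
  · exact spk_mem_wheel i
  · exact rim_mem_wheel i

omit hk in
lemma treeB_sub : treeB k d ⊆ wheelEdges k := by
  rintro e ⟨i, ⟨rfl, -⟩ | ⟨rfl, -⟩⟩
  · exact spk_mem_wheel i
  · exact rim_mem_wheel i

lemma spk_mem_treeA_iff {i : ZMod k} : spk k i ∈ treeA k d ↔ d (i - 1) = 1 := by
  constructor
  · rintro ⟨j, ⟨he, hd⟩ | ⟨he, hd⟩⟩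
    · rwa [spk_inj he]
    · exact absurd he (spk_ne_rim i j)
  · intro h
    exact ⟨i, Or.inl ⟨rfl, h⟩⟩

lemma rim_mem_treeA_iff {i : ZMod k} : rim k i ∈ treeA k d ↔ d i = 2 := by
  constructor
  · rintro ⟨j, ⟨he, hd⟩ | ⟨he, hd⟩⟩
    · exact absurd he.symm (spk_ne_rim j i)
    · rwa [rim_inj hk he]
  · intro h
    exact ⟨i, Or.inr ⟨rfl, h⟩⟩

lemma spk_mem_treeB_iff {i : ZMod k} : spk k i ∈ treeB k d ↔ d (i + 1) = 1 := by
  constructor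
  · rintro ⟨j, ⟨he, hd⟩ | ⟨he, hd⟩⟩
    · rwa [spk_inj he]
    · exact absurd he (spk_ne_rim i j)
  · intro h
    exact ⟨i, Or.inl ⟨rfl, h⟩⟩

lemma rim_mem_treeB_iff {i : ZMod k} : rim k i ∈ treeB k d ↔ d (i + 1) = 2 := by
  constructor
  · rintro ⟨j, ⟨he, hd⟩ | ⟨he, hd⟩⟩
    · exact absurd he.symm (spk_ne_rim j i)
    · rwa [rim_inj hk he]
  · intro h
    exact ⟨i, Or.inr ⟨rfl, h⟩⟩

lemma treeA_compl (hvals : ∀ i, d i = 1 ∨ d i = 2) :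
    wheelEdges k \ treeA k d = treeA k (fun i => 3 - d i) := by
  ext e
  constructor
  · rintro ⟨⟨j, hj | hj⟩, hni⟩ <;> subst hj
    · have h1 : ¬ d (j - 1) = 1 := fun hcon => hni ((spk_mem_treeA_iff hk).mpr hcon)
      refine (spk_mem_treeA_iff hk (d := fun i => 3 - d i)).mpr ?_
      show 3 - d (j - 1) = 1
      have := hvals (j - 1)
      omega
    · have h1 : ¬ d j = 2 := fun hcon => hni ((rim_mem_treeA_iff hk).mpr hcon)
      refine (rim_mem_treeA_iff hk (d := fun i => 3 - d i)).mpr ?_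
      show 3 - d j = 2
      have := hvals j
      omega
  · rintro ⟨j, ⟨rfl, hd⟩ | ⟨rfl, hd⟩⟩
    · refine ⟨spk_mem_wheel j, fun hcon => ?_⟩
      have h2 := (spk_mem_treeA_iff hk).mp hcon
      have h3 : 3 - d (j - 1) = 1 := hd
      have := hvals (j - 1)
      omega
    · refine ⟨rim_mem_wheel j, fun hcon => ?_⟩
      have h2 := (rim_mem_treeA_iff hk).mp hcon
      have h3 : 3 - d j = 2 := hd
      have := hvals j
      omega

lemma treeB_compl (hvals : ∀ i, d i = 1 ∨ d i = 2) :
    wheelEdges k \ treeB k d = treeB k (fun i => 3 - d i) := by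
  ext e
  constructor
  · rintro ⟨⟨j, hj | hj⟩, hni⟩ <;> subst hj
    · have h1 : ¬ d (j + 1) = 1 := fun hcon => hni ((spk_mem_treeB_iff hk).mpr hcon)
      refine (spk_mem_treeB_iff hk (d := fun i => 3 - d i)).mpr ?_
      show 3 - d (j + 1) = 1
      have := hvals (j + 1)
      omega
    · have h1 : ¬ d (j + 1) = 2 := fun hcon => hni ((rim_mem_treeB_iff hk).mpr hcon)
      refine (rim_mem_treeB_iff hk (d := fun i => 3 - d i)).mpr ?_
      show 3 - d (j + 1) = 2
      have := hvals (j + 1)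
      omega
  · rintro ⟨j, ⟨rfl, hd⟩ | ⟨rfl, hd⟩⟩
    · refine ⟨spk_mem_wheel j, fun hcon => ?_⟩
      have h2 := (spk_mem_treeB_iff hk).mp hcon
      have h3 : 3 - d (j + 1) = 1 := hd
      have := hvals (j + 1)
      omega
    · refine ⟨rim_mem_wheel j, fun hcon => ?_⟩
      have h2 := (rim_mem_treeB_iff hk).mp hcon
      have h3 : 3 - d (j + 1) = 2 := hd
      have := hvals (j + 1)
      omega

omit hk in
lemma spk_cases {x y : Option (ZMod k)} {j : ZMod k} (h : s(x, y) = spk k j) :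
    (x = none ∧ y = some j) ∨ (x = some j ∧ y = none) := by
  rw [spk, Sym2.eq_iff] at h
  tauto

omit hk in
lemma rim_cases {x y : Option (ZMod k)} {j : ZMod k} (h : s(x, y) = rim k j) :
    (x = some j ∧ y = some (j + 1)) ∨ (x = some (j + 1) ∧ y = some j) := by
  rw [rim, Sym2.eq_iff] at h
  tauto

lemma val_le_of_ne_neg_one {x : ZMod k} (hx : x ≠ -1) : x.val ≤ k - 2 := by
  haveI : NeZero k := ⟨by omega⟩
  have h1 : x.val < k := ZMod.val_lt x
  rcases Nat.lt_or_ge x.val (k - 1) with h | h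
  · omega
  · exfalso
    apply hx
    have : x = ((x.val : ℕ) : ZMod k) := (ZMod.natCast_rightInverse x).symm
    rw [this, show x.val = k - 1 by omega]
    rw [Nat.cast_sub (by omega), ZMod.natCast_self]
    push_cast
    ring

lemma exists_step {d : ZMod k → ℕ} (hnc : ∃ i j : ZMod k, d i ≠ d j) :
    ∃ i, d i ≠ d (i + 1) := by
  haveI : NeZero k := ⟨by omega⟩
  by_contra h
  push_neg at h
  obtain ⟨i, j, hij⟩ := hnc
  apply hij
  have key : ∀ n : ℕ, ∀ x : ZMod k, d (x + (n : ℕ)) = d x := by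
    intro n
    induction n with
    | zero => simp
    | succ n' ih =>
      intro x
      rw [show x + ((n' + 1 : ℕ) : ZMod k) = x + 1 + (n' : ℕ) by push_cast; ring, ih (x + 1),
        ← h x]
  have h2 := key ((j - i).val) i
  rw [ZMod.natCast_rightInverse (j - i), show i + (j - i) = j by ring] at h2
  exact h2.symm

lemma eq_treeA {T : Set (Sym2 (Option (ZMod k)))} (hS : Sol k T d)
    (hA : ∀ i, rim k i ∈ T ↔ d i = 2) : T = treeA k d := by
  have hspk : ∀ i, spk k i ∈ T ↔ d (i - 1) = 1 := by
    intro i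
    have e := hS.deg i
    have hv := hS.vals i
    have hv1 := hS.vals (i - 1)
    have c1 := hA (i - 1)
    have c2 := hA i
    rcases cif_cases (spk k i ∈ T) with ⟨a0, b0⟩ | ⟨a0, b0⟩ <;>
      rcases cif_cases (rim k (i - 1) ∈ T) with ⟨a1, b1⟩ | ⟨a1, b1⟩ <;>
      rcases cif_cases (rim k i ∈ T) with ⟨a2, b2⟩ | ⟨a2, b2⟩ <;>
      rw [a0, a1, a2] at e <;> rw [c1] at b1 <;> rw [c2] at b2 <;>
      first
        | (have h9 : d (i - 1) = 1 := by omega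
           tauto)
        | (have h9 : ¬ (d (i - 1) = 1) := by omega
           tauto)
  ext e
  constructor
  · intro heT
    rcases hS.sub heT with ⟨j, hj | hj⟩ <;> subst hj
    · exact (spk_mem_treeA_iff hk).mpr ((hspk j).mp heT)
    · exact (rim_mem_treeA_iff hk).mpr ((hA j).mp heT)
  · rintro ⟨j, ⟨rfl, hd⟩ | ⟨rfl, hd⟩⟩
    · exact (hspk j).mpr hd
    · exact (hA j).mpr hd

lemma eq_treeB {T : Set (Sym2 (Option (ZMod k)))} (hS : Sol k T d)
    (hB : ∀ i, rim k i ∈ T ↔ d (i + 1) = 2) : T = treeB k d := by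
  have hspk : ∀ i, spk k i ∈ T ↔ d (i + 1) = 1 := by
    intro i
    have e := hS.deg i
    have hv := hS.vals i
    have hv1 := hS.vals (i + 1)
    have c1 := hB (i - 1)
    rw [show i - 1 + 1 = i by ring] at c1
    have c2 := hB i
    rcases cif_cases (spk k i ∈ T) with ⟨a0, b0⟩ | ⟨a0, b0⟩ <;>
      rcases cif_cases (rim k (i - 1) ∈ T) with ⟨a1, b1⟩ | ⟨a1, b1⟩ <;>
      rcases cif_cases (rim k i ∈ T) with ⟨a2, b2⟩ | ⟨a2, b2⟩ <;>
      rw [a0, a1, a2] at e <;> rw [c1] at b1 <;> rw [c2] at b2 <;>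
      first
        | (have h9 : d (i + 1) = 1 := by omega
           tauto)
        | (have h9 : ¬ (d (i + 1) = 1) := by omega
           tauto)
  ext e
  constructor
  · intro heT
    rcases hS.sub heT with ⟨j, hj | hj⟩ <;> subst hj
    · exact (spk_mem_treeB_iff hk).mpr ((hspk j).mp heT)
    · exact (rim_mem_treeB_iff hk).mpr ((hB j).mp heT)
  · rintro ⟨j, ⟨rfl, hd⟩ | ⟨rfl, hd⟩⟩
    · exact (hspk j).mpr hd
    · exact (hB j).mpr hd

lemma treeA_conn (hvals : ∀ i, d i = 1 ∨ d i = 2) (hone : ∃ w, d w = 1) :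
    (SimpleGraph.fromEdgeSet (treeA k d)).Connected := by
  haveI : NeZero k := ⟨by omega⟩
  classical
  have main : ∀ n : ℕ, ∀ i : ZMod k, (∀ m : ℕ, m < n → d (i - 1 - (m : ℕ)) = 2) →
      d (i - 1 - (n : ℕ)) = 1 →
      (SimpleGraph.fromEdgeSet (treeA k d)).Reachable (some i) none := by
    intro n
    induction n with
    | zero =>
      intro i _ h1
      refine SimpleGraph.Adj.reachable ?_
      rw [SimpleGraph.fromEdgeSet_adj]
      refine ⟨?_, by simp⟩
      have e0 : (s(some i, none) : Sym2 (Option (ZMod k))) = spk k i := Sym2.eq_swap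
      rw [e0]
      exact (spk_mem_treeA_iff hk).mpr (by simpa using h1)
    | succ n' ih =>
      intro i hm h1
      have h2 : d (i - 1) = 2 := by simpa using hm 0 (by omega)
      have hadj : (SimpleGraph.fromEdgeSet (treeA k d)).Adj (some i) (some (i - 1)) := by
        rw [SimpleGraph.fromEdgeSet_adj]
        constructor
        · have e1 : (s(some i, some (i - 1)) : Sym2 (Option (ZMod k))) = rim k (i - 1) := by
            rw [rim, show i - 1 + 1 = i by ring, Sym2.eq_swap]
          rw [e1]
          exact (rim_mem_treeA_iff hk).mpr h2
        · simp only [ne_eq, Option.some.injEq]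
          intro hcon
          exact one_ne_zero' hk (by linear_combination hcon)
      refine hadj.reachable.trans (ih (i - 1) ?_ ?_)
      · intro m hmlt
        have := hm (m + 1) (by omega)
        rw [show i - 1 - 1 - (m : ℕ) = i - 1 - ((m + 1 : ℕ) : ZMod k) by push_cast; ring]
        exact this
      · rw [show i - 1 - 1 - (n' : ℕ) = i - 1 - ((n' + 1 : ℕ) : ZMod k) by push_cast; ring]
        exact h1
  have hreach : ∀ i : ZMod k, (SimpleGraph.fromEdgeSet (treeA k d)).Reachable (some i) none := by
    intro i
    obtain ⟨w, hw⟩ := hone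
    have hex : ∃ n : ℕ, d (i - 1 - (n : ℕ)) = 1 := by
      refine ⟨(i - 1 - w).val, ?_⟩
      rw [ZMod.natCast_rightInverse (i - 1 - w), show i - 1 - (i - 1 - w) = w by ring]
      exact hw
    refine main (Nat.find hex) i (fun m hm => ?_) (Nat.find_spec hex)
    exact (hvals _).resolve_left (Nat.find_min hex hm)
  rw [SimpleGraph.connected_iff]
  refine ⟨?_, ⟨none⟩⟩
  intro u v
  rcases u with _ | i <;> rcases v with _ | j
  · exact SimpleGraph.Reachable.refl _
  · exact (hreach j).symm
  · exact hreach i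
  · exact (hreach i).trans (hreach j).symm

lemma treeB_conn (hvals : ∀ i, d i = 1 ∨ d i = 2) (hone : ∃ w, d w = 1) :
    (SimpleGraph.fromEdgeSet (treeB k d)).Connected := by
  haveI : NeZero k := ⟨by omega⟩
  classical
  have main : ∀ n : ℕ, ∀ i : ZMod k, (∀ m : ℕ, m < n → d (i + 1 + (m : ℕ)) = 2) →
      d (i + 1 + (n : ℕ)) = 1 →
      (SimpleGraph.fromEdgeSet (treeB k d)).Reachable (some i) none := by
    intro n
    induction n with
    | zero =>
      intro i _ h1
      refine SimpleGraph.Adj.reachable ?_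
      rw [SimpleGraph.fromEdgeSet_adj]
      refine ⟨?_, by simp⟩
      have e0 : (s(some i, none) : Sym2 (Option (ZMod k))) = spk k i := Sym2.eq_swap
      rw [e0]
      exact (spk_mem_treeB_iff hk).mpr (by simpa using h1)
    | succ n' ih =>
      intro i hm h1
      have h2 : d (i + 1) = 2 := by simpa using hm 0 (by omega)
      have hadj : (SimpleGraph.fromEdgeSet (treeB k d)).Adj (some i) (some (i + 1)) := by
        rw [SimpleGraph.fromEdgeSet_adj]
        constructor
        · exact (rim_mem_treeB_iff hk).mpr h2
        · simp only [ne_eq, Option.some.injEq]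
          intro hcon
          exact one_ne_zero' hk (by linear_combination - hcon)
      refine hadj.reachable.trans (ih (i + 1) ?_ ?_)
      · intro m hmlt
        have := hm (m + 1) (by omega)
        rw [show i + 1 + 1 + (m : ℕ) = i + 1 + ((m + 1 : ℕ) : ZMod k) by push_cast; ring]
        exact this
      · rw [show i + 1 + 1 + (n' : ℕ) = i + 1 + ((n' + 1 : ℕ) : ZMod k) by push_cast; ring]
        exact h1
  have hreach : ∀ i : ZMod k, (SimpleGraph.fromEdgeSet (treeB k d)).Reachable (some i) none := by
    intro i
    obtain ⟨w, hw⟩ := hone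
    have hex : ∃ n : ℕ, d (i + 1 + (n : ℕ)) = 1 := by
      refine ⟨(w - i - 1).val, ?_⟩
      rw [ZMod.natCast_rightInverse (w - i - 1), show i + 1 + (w - i - 1) = w by ring]
      exact hw
    refine main (Nat.find hex) i (fun m hm => ?_) (Nat.find_spec hex)
    exact (hvals _).resolve_left (Nat.find_min hex hm)
  rw [SimpleGraph.connected_iff]
  refine ⟨?_, ⟨none⟩⟩
  intro u v
  rcases u with _ | i <;> rcases v with _ | j
  · exact SimpleGraph.Reachable.refl _
  · exact (hreach j).symm
  · exact hreach i
  · exact (hreach i).trans (hreach j).symm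

omit hk in
lemma bridge_of_cut {X : Set (Sym2 (Option (ZMod k)))} {u v : Option (ZMod k)}
    (he : s(u, v) ∈ X) (hne : u ≠ v) (A : Set (Option (ZMod k))) (hu : u ∈ A) (hv : v ∉ A)
    (hclosed : ∀ e' ∈ X, ∀ x y : Option (ZMod k), e' = s(x, y) → x ∈ A → y ∉ A →
      e' = s(u, v)) :
    (SimpleGraph.fromEdgeSet X).IsBridge s(u, v) := by
  rw [SimpleGraph.isBridge_iff]
  rintro ⟨p⟩
  obtain ⟨D, -, h1, h2⟩ := p.exists_boundary_dart A hu hv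
  have hadj := D.adj
  rw [SimpleGraph.deleteEdges_adj, SimpleGraph.fromEdgeSet_adj] at hadj
  obtain ⟨⟨hmem, hne'⟩, hnot⟩ := hadj
  have heq := hclosed _ hmem D.fst D.snd rfl h1 h2
  exact hnot (by rw [heq]; exact Set.mem_singleton _)

lemma treeA_acyclic (hvals : ∀ i, d i = 1 ∨ d i = 2) (hone : ∃ w, d w = 1) :
    (SimpleGraph.fromEdgeSet (treeA k d)).IsAcyclic := by
  haveI : NeZero k := ⟨by omega⟩
  classical
  rw [SimpleGraph.isAcyclic_iff_forall_adj_isBridge]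
  intro x y hadj
  rw [SimpleGraph.fromEdgeSet_adj] at hadj
  obtain ⟨hmem, hne⟩ := hadj
  obtain ⟨j, ⟨hej, hdj⟩ | ⟨hej, hdj⟩⟩ := hmem
  · -- spoke edge, d (j - 1) = 1
    obtain ⟨w, hw⟩ := hone
    have hex : ∃ n : ℕ, d (j + (n : ℕ)) = 1 := by
      refine ⟨(w - j).val, ?_⟩
      rw [ZMod.natCast_rightInverse (w - j), show j + (w - j) = w by ring]
      exact hw
    set N := Nat.find hex with hNdef
    have hN : d (j + (N : ℕ)) = 1 := Nat.find_spec hex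
    have hmid : ∀ m : ℕ, m < N → d (j + (m : ℕ)) = 2 := fun m hm =>
      (hvals _).resolve_left (Nat.find_min hex hm)
    set A : Set (Option (ZMod k)) := {z | ∃ m : ℕ, m ≤ N ∧ z = some (j + (m : ℕ))} with hA
    have hclosed : ∀ e' ∈ treeA k d, ∀ p q : Option (ZMod k), e' = s(p, q) → p ∈ A → q ∉ A →
        e' = s(some j, none) := by
      rintro e' he' p q rfl ⟨m, hm, rfl⟩ hq
      obtain ⟨j', ⟨he, hd'⟩ | ⟨he, hd'⟩⟩ := he'
      · rcases spk_cases he with ⟨hp, -⟩ | ⟨hp, -⟩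
        · exact absurd hp (by simp)
        · rw [Option.some_inj] at hp
          rcases Nat.eq_zero_or_pos m with rfl | hmp
          · have hz : j + ((0 : ℕ) : ZMod k) = j := by norm_num
            rw [he, ← hp, hz, spk, Sym2.eq_swap]
          · exfalso
            rw [← hp] at hd'
            rw [show j + ((m : ℕ) : ZMod k) - 1 = j + ((m - 1 : ℕ) : ZMod k) by
              rcases m with _ | m''
              · exact absurd hmp (lt_irrefl 0)
              · push_cast; ring] at hd'
            have := hmid (m - 1) (by omega)
            omega
      · rcases rim_cases he with ⟨hp, hq2⟩ | ⟨hp, hq2⟩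
        · exfalso
          rw [Option.some_inj] at hp
          have hmN : m < N := by
            rcases eq_or_lt_of_le hm with rfl | h
            · rw [← hp] at hd'; omega
            · exact h
          apply hq
          rw [hq2, ← hp]
          exact ⟨m + 1, by omega, by congr 1; push_cast; ring⟩
        · rw [Option.some_inj] at hp
          rcases Nat.eq_zero_or_pos m with rfl | hmp
          · exfalso
            push_cast at hp
            have hj' : j' = j - 1 := by linear_combination - hp
            rw [hj'] at hd'
            omega
          · exfalso
            apply hq
            rw [hq2]
            refine ⟨m - 1, by omega, ?_⟩
            congr 1
            have h9 : ((m - 1 : ℕ) : ZMod k) = ((m : ℕ) : ZMod k) - 1 := by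
              rcases m with _ | m''
              · exact absurd hmp (lt_irrefl 0)
              · push_cast; ring
            rw [h9]
            linear_combination - hp
    have hbr : (SimpleGraph.fromEdgeSet (treeA k d)).IsBridge s(some j, none) :=
      bridge_of_cut (by rw [Sym2.eq_swap]; exact ⟨j, Or.inl ⟨rfl, hdj⟩⟩) (by simp)
        A ⟨0, by omega, by norm_num⟩ (by rintro ⟨m, -, h⟩; exact nomatch h) hclosed
    rw [hej, show spk k j = s(some j, none) from Sym2.eq_swap]
    exact hbr
  · -- rim edge, d j = 2
    obtain ⟨w, hw⟩ := hone
    have hwj : w ≠ j := fun h => by rw [h] at hw; omega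
    have hwit : d (j + 1 + (((w - j - 1).val : ℕ) : ZMod k)) = 1 := by
      rw [ZMod.natCast_rightInverse (w - j - 1), show j + 1 + (w - j - 1) = w by ring]
      exact hw
    have hex : ∃ n : ℕ, d (j + 1 + (n : ℕ)) = 1 := ⟨(w - j - 1).val, hwit⟩
    set N := Nat.find hex with hNdef
    have hN : d (j + 1 + (N : ℕ)) = 1 := Nat.find_spec hex
    have hmid : ∀ m : ℕ, m < N → d (j + 1 + (m : ℕ)) = 2 := fun m hm =>
      (hvals _).resolve_left (Nat.find_min hex hm)
    have hNle : N ≤ k - 2 := by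
      have h1 : N ≤ (w - j - 1).val := Nat.find_min' hex hwit
      have h2 : (w - j - 1 : ZMod k) ≠ -1 := by
        intro h
        exact hwj (by linear_combination h)
      exact le_trans h1 (val_le_of_ne_neg_one hk h2)
    set A : Set (Option (ZMod k)) := {z | ∃ m : ℕ, m ≤ N ∧ z = some (j + 1 + (m : ℕ))} with hA
    have hjA : some j ∉ A := by
      rintro ⟨m, hm, hsome⟩
      rw [Option.some_inj] at hsome
      have hz : ((m + 1 : ℕ) : ZMod k) = 0 := by push_cast; linear_combination - hsome
      rw [ZMod.natCast_eq_zero_iff] at hz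
      have := Nat.le_of_dvd (by omega) hz
      omega
    have hclosed : ∀ e' ∈ treeA k d, ∀ p q : Option (ZMod k), e' = s(p, q) → p ∈ A → q ∉ A →
        e' = s(some (j + 1), some j) := by
      rintro e' he' p q rfl ⟨m, hm, rfl⟩ hq
      obtain ⟨j', ⟨he, hd'⟩ | ⟨he, hd'⟩⟩ := he'
      · rcases spk_cases he with ⟨hp, -⟩ | ⟨hp, -⟩
        · exact absurd hp (by simp)
        · exfalso
          rw [Option.some_inj] at hp
          rcases Nat.eq_zero_or_pos m with rfl | hmp
          · rw [← hp, show j + 1 + ((0 : ℕ) : ZMod k) - 1 = j by push_cast; ring] at hd'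
            omega
          · rw [← hp, show j + 1 + ((m : ℕ) : ZMod k) - 1 = j + 1 + ((m - 1 : ℕ) : ZMod k) by
              rcases m with _ | m''
              · exact absurd hmp (lt_irrefl 0)
              · push_cast; ring] at hd'
            have := hmid (m - 1) (by omega)
            omega
      · rcases rim_cases he with ⟨hp, hq2⟩ | ⟨hp, hq2⟩
        · exfalso
          rw [Option.some_inj] at hp
          have hmN : m < N := by
            rcases eq_or_lt_of_le hm with rfl | h
            · rw [← hp] at hd'; omega
            · exact h
          apply hq
          rw [hq2, ← hp]
          exact ⟨m + 1, by omega, by congr 1; push_cast; ring⟩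
        · rw [Option.some_inj] at hp
          rcases Nat.eq_zero_or_pos m with rfl | hmp
          · push_cast at hp
            have hj' : j' = j := by linear_combination - hp
            rw [he, hj', rim, Sym2.eq_swap]
          · exfalso
            apply hq
            rw [hq2]
            refine ⟨m - 1, by omega, ?_⟩
            congr 1
            have h9 : ((m - 1 : ℕ) : ZMod k) = ((m : ℕ) : ZMod k) - 1 := by
              rcases m with _ | m''
              · exact absurd hmp (lt_irrefl 0)
              · push_cast; ring
            rw [h9]
            linear_combination - hp
    have hbr : (SimpleGraph.fromEdgeSet (treeA k d)).IsBridge s(some (j + 1), some j) :=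
      bridge_of_cut (by rw [Sym2.eq_swap]; exact ⟨j, Or.inr ⟨rfl, hdj⟩⟩)
        (by simp only [ne_eq, Option.some.injEq]; exact succ_ne hk j)
        A ⟨0, by omega, by norm_num⟩ hjA hclosed
    rw [hej, show rim k j = s(some (j + 1), some j) from Sym2.eq_swap]
    exact hbr

lemma treeB_acyclic (hvals : ∀ i, d i = 1 ∨ d i = 2) (hone : ∃ w, d w = 1) :
    (SimpleGraph.fromEdgeSet (treeB k d)).IsAcyclic := by
  haveI : NeZero k := ⟨by omega⟩
  classical
  rw [SimpleGraph.isAcyclic_iff_forall_adj_isBridge]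
  intro x y hadj
  rw [SimpleGraph.fromEdgeSet_adj] at hadj
  obtain ⟨hmem, hne⟩ := hadj
  obtain ⟨j, ⟨hej, hdj⟩ | ⟨hej, hdj⟩⟩ := hmem
  · -- spoke edge, d (j + 1) = 1
    obtain ⟨w, hw⟩ := hone
    have hex : ∃ n : ℕ, d (j - (n : ℕ)) = 1 := by
      refine ⟨(j - w).val, ?_⟩
      rw [ZMod.natCast_rightInverse (j - w), show j - (j - w) = w by ring]
      exact hw
    set N := Nat.find hex with hNdef
    have hN : d (j - (N : ℕ)) = 1 := Nat.find_spec hex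
    have hmid : ∀ m : ℕ, m < N → d (j - (m : ℕ)) = 2 := fun m hm =>
      (hvals _).resolve_left (Nat.find_min hex hm)
    set A : Set (Option (ZMod k)) := {z | ∃ m : ℕ, m ≤ N ∧ z = some (j - (m : ℕ))} with hA
    have hclosed : ∀ e' ∈ treeB k d, ∀ p q : Option (ZMod k), e' = s(p, q) → p ∈ A → q ∉ A →
        e' = s(some j, none) := by
      rintro e' he' p q rfl ⟨m, hm, rfl⟩ hq
      obtain ⟨j', ⟨he, hd'⟩ | ⟨he, hd'⟩⟩ := he'
      · rcases spk_cases he with ⟨hp, -⟩ | ⟨hp, -⟩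
        · exact absurd hp (by simp)
        · rw [Option.some_inj] at hp
          rcases Nat.eq_zero_or_pos m with rfl | hmp
          · have hz : j - ((0 : ℕ) : ZMod k) = j := by norm_num
            rw [he, ← hp, hz, spk, Sym2.eq_swap]
          · exfalso
            rw [← hp] at hd'
            rw [show j - ((m : ℕ) : ZMod k) + 1 = j - ((m - 1 : ℕ) : ZMod k) by
              rcases m with _ | m''
              · exact absurd hmp (lt_irrefl 0)
              · push_cast; ring] at hd'
            have := hmid (m - 1) (by omega)
            omega
      · rcases rim_cases he with ⟨hp, hq2⟩ | ⟨hp, hq2⟩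
        · -- p = some j', so j' = j - m ; q = some (j' + 1)
          rw [Option.some_inj] at hp
          rcases Nat.eq_zero_or_pos m with rfl | hmp
          · exfalso
            rw [← hp, show j - ((0 : ℕ) : ZMod k) + 1 = j + 1 by push_cast; ring] at hd'
            omega
          · exfalso
            apply hq
            rw [hq2, ← hp]
            refine ⟨m - 1, by omega, ?_⟩
            congr 1
            have h9 : ((m - 1 : ℕ) : ZMod k) = ((m : ℕ) : ZMod k) - 1 := by
              rcases m with _ | m''
              · exact absurd hmp (lt_irrefl 0)
              · push_cast; ring
            rw [h9]
            ring
        · -- p = some (j' + 1), so j' + 1 = j - m, j' = j - (m+1)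
          exfalso
          rw [Option.some_inj] at hp
          have hd'' : d (j - (m : ℕ)) = 2 := by rw [← hp] at hd'; exact hd'
          have hmN : m < N := by
            rcases eq_or_lt_of_le hm with rfl | h
            · omega
            · exact h
          apply hq
          rw [hq2]
          refine ⟨m + 1, by omega, ?_⟩
          congr 1
          have h9 : ((m + 1 : ℕ) : ZMod k) = ((m : ℕ) : ZMod k) + 1 := by push_cast; ring
          rw [h9]
          linear_combination - hp
    have hbr : (SimpleGraph.fromEdgeSet (treeB k d)).IsBridge s(some j, none) :=
      bridge_of_cut (by rw [Sym2.eq_swap]; exact ⟨j, Or.inl ⟨rfl, hdj⟩⟩) (by simp)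
        A ⟨0, by omega, by norm_num⟩ (by rintro ⟨m, -, h⟩; exact nomatch h) hclosed
    rw [hej, show spk k j = s(some j, none) from Sym2.eq_swap]
    exact hbr
  · -- rim edge, d (j + 1) = 2
    obtain ⟨w, hw⟩ := hone
    have hwj : w ≠ j + 1 := fun h => by rw [h] at hw; omega
    have hwit : d (j - (((j - w).val : ℕ) : ZMod k)) = 1 := by
      rw [ZMod.natCast_rightInverse (j - w), show j - (j - w) = w by ring]
      exact hw
    have hex : ∃ n : ℕ, d (j - (n : ℕ)) = 1 := ⟨(j - w).val, hwit⟩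
    set N := Nat.find hex with hNdef
    have hN : d (j - (N : ℕ)) = 1 := Nat.find_spec hex
    have hmid : ∀ m : ℕ, m < N → d (j - (m : ℕ)) = 2 := fun m hm =>
      (hvals _).resolve_left (Nat.find_min hex hm)
    have hNle : N ≤ k - 2 := by
      have h1 : N ≤ (j - w).val := Nat.find_min' hex hwit
      have h2 : (j - w : ZMod k) ≠ -1 := by
        intro h
        exact hwj (by linear_combination - h)
      exact le_trans h1 (val_le_of_ne_neg_one hk h2)
    set A : Set (Option (ZMod k)) := {z | ∃ m : ℕ, m ≤ N ∧ z = some (j - (m : ℕ))} with hA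
    have hjA : some (j + 1) ∉ A := by
      rintro ⟨m, hm, hsome⟩
      rw [Option.some_inj] at hsome
      have hz : ((m + 1 : ℕ) : ZMod k) = 0 := by push_cast; linear_combination hsome
      rw [ZMod.natCast_eq_zero_iff] at hz
      have := Nat.le_of_dvd (by omega) hz
      omega
    have hclosed : ∀ e' ∈ treeB k d, ∀ p q : Option (ZMod k), e' = s(p, q) → p ∈ A → q ∉ A →
        e' = s(some j, some (j + 1)) := by
      rintro e' he' p q rfl ⟨m, hm, rfl⟩ hq
      obtain ⟨j', ⟨he, hd'⟩ | ⟨he, hd'⟩⟩ := he'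
      · rcases spk_cases he with ⟨hp, -⟩ | ⟨hp, -⟩
        · exact absurd hp (by simp)
        · exfalso
          rw [Option.some_inj] at hp
          rcases Nat.eq_zero_or_pos m with rfl | hmp
          · rw [← hp, show j - ((0 : ℕ) : ZMod k) + 1 = j + 1 by push_cast; ring] at hd'
            omega
          · rw [← hp, show j - ((m : ℕ) : ZMod k) + 1 = j - ((m - 1 : ℕ) : ZMod k) by
              rcases m with _ | m''
              · exact absurd hmp (lt_irrefl 0)
              · push_cast; ring] at hd'
            have := hmid (m - 1) (by omega)
            omega
      · rcases rim_cases he with ⟨hp, hq2⟩ | ⟨hp, hq2⟩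
        · -- p = some j' : j' = j - m
          rw [Option.some_inj] at hp
          rcases Nat.eq_zero_or_pos m with rfl | hmp
          · have hj' : j' = j := by rw [← hp]; push_cast; ring
            rw [he, hj']
            rfl
          · exfalso
            apply hq
            rw [hq2, ← hp]
            refine ⟨m - 1, by omega, ?_⟩
            congr 1
            have h9 : ((m - 1 : ℕ) : ZMod k) = ((m : ℕ) : ZMod k) - 1 := by
              rcases m with _ | m''
              · exact absurd hmp (lt_irrefl 0)
              · push_cast; ring
            rw [h9]
            ring
        · -- p = some (j' + 1) : j' + 1 = j - m
          exfalso
          rw [Option.some_inj] at hp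
          have hd'' : d (j - (m : ℕ)) = 2 := by rw [← hp] at hd'; exact hd'
          have hmN : m < N := by
            rcases eq_or_lt_of_le hm with rfl | h
            · omega
            · exact h
          apply hq
          rw [hq2]
          refine ⟨m + 1, by omega, ?_⟩
          congr 1
          have h9 : ((m + 1 : ℕ) : ZMod k) = ((m : ℕ) : ZMod k) + 1 := by push_cast; ring
          rw [h9]
          linear_combination - hp
    have hbr : (SimpleGraph.fromEdgeSet (treeB k d)).IsBridge s(some j, some (j + 1)) :=
      bridge_of_cut (show rim k j ∈ treeB k d from ⟨j, Or.inr ⟨rfl, hdj⟩⟩)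
        (by simp only [ne_eq, Option.some.injEq]; intro h; exact succ_ne hk j h.symm)
        A ⟨0, by omega, by norm_num⟩ hjA hclosed
    rw [hej]
    exact hbr

lemma treeA_val (hvals : ∀ i, d i = 1 ∨ d i = 2) (i : ZMod k) :
    valOf (treeA k d) (some i) = d i := by
  rw [val_decomp hk treeA_sub]
  have c1 : spk k i ∈ treeA k d ↔ d (i - 1) = 1 := spk_mem_treeA_iff hk
  have c2 : rim k (i - 1) ∈ treeA k d ↔ d (i - 1) = 2 := rim_mem_treeA_iff hk
  have c3 : rim k i ∈ treeA k d ↔ d i = 2 := rim_mem_treeA_iff hk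
  have h1 := hvals (i - 1)
  have h2 := hvals i
  rcases cif_cases (spk k i ∈ treeA k d) with ⟨a1, b1⟩ | ⟨a1, b1⟩ <;>
    rcases cif_cases (rim k (i - 1) ∈ treeA k d) with ⟨a2, b2⟩ | ⟨a2, b2⟩ <;>
    rcases cif_cases (rim k i ∈ treeA k d) with ⟨a3, b3⟩ | ⟨a3, b3⟩ <;>
    rw [a1, a2, a3] <;> rw [c1] at b1 <;> rw [c2] at b2 <;> rw [c3] at b3 <;> omega

lemma treeB_val (hvals : ∀ i, d i = 1 ∨ d i = 2) (i : ZMod k) :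
    valOf (treeB k d) (some i) = d i := by
  rw [val_decomp hk treeB_sub]
  have c1 : spk k i ∈ treeB k d ↔ d (i + 1) = 1 := spk_mem_treeB_iff hk
  have c2 : rim k (i - 1) ∈ treeB k d ↔ d (i - 1 + 1) = 2 := rim_mem_treeB_iff hk
  rw [show i - 1 + 1 = i by ring] at c2
  have c3 : rim k i ∈ treeB k d ↔ d (i + 1) = 2 := rim_mem_treeB_iff hk
  have h1 := hvals (i + 1)
  have h2 := hvals i
  rcases cif_cases (spk k i ∈ treeB k d) with ⟨a1, b1⟩ | ⟨a1, b1⟩ <;>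
    rcases cif_cases (rim k (i - 1) ∈ treeB k d) with ⟨a2, b2⟩ | ⟨a2, b2⟩ <;>
    rcases cif_cases (rim k i ∈ treeB k d) with ⟨a3, b3⟩ | ⟨a3, b3⟩ <;>
    rw [a1, a2, a3] <;> rw [c1] at b1 <;> rw [c2] at b2 <;> rw [c3] at b3 <;> omega

end layer4

end Wheel

theorem stmt2 (k : ℕ) (hk : 3 ≤ k) (d : ZMod k → ℕ)
    (hvals : ∀ i, d i = 1 ∨ d i = 2) (hnonconst : ∃ i j, d i ≠ d j) :
    {T : Set (Sym2 (Option (ZMod k))) |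
      IsCoupledTree k T ∧ ∀ i : ZMod k, valOf T (some i) = d i}.ncard = 2 := by
  classical
  obtain ⟨i₀, j₀, hij₀⟩ := hnonconst
  have hone : ∃ w, d w = 1 := by
    rcases hvals i₀ with h | h
    · exact ⟨i₀, h⟩
    · rcases hvals j₀ with h' | h'
      · exact ⟨j₀, h'⟩
      · exact absurd (h.trans h'.symm) hij₀
  have htwo : ∃ w, d w = 2 := by
    rcases hvals i₀ with h | h
    · rcases hvals j₀ with h' | h'
      · exact absurd (h.trans h'.symm) hij₀
      · exact ⟨j₀, h'⟩
    · exact ⟨i₀, h⟩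
  have hvals' : ∀ i, (fun i => 3 - d i) i = 1 ∨ (fun i => 3 - d i) i = 2 := by
    intro i
    have := hvals i
    show 3 - d i = 1 ∨ 3 - d i = 2
    omega
  have hone' : ∃ w, (fun i => 3 - d i) w = 1 := by
    obtain ⟨w, hw⟩ := htwo
    exact ⟨w, by show 3 - d w = 1; omega⟩
  -- treeA is a solution
  have hAmem : IsCoupledTree k (Wheel.treeA k d) ∧
      ∀ i : ZMod k, valOf (Wheel.treeA k d) (some i) = d i := by
    refine ⟨⟨Wheel.treeA_sub, ⟨Wheel.treeA_conn hk hvals hone, Wheel.treeA_acyclic hk hvals hone⟩,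
      ?_⟩, fun i => Wheel.treeA_val hk hvals i⟩
    rw [Wheel.treeA_compl hk hvals]
    exact ⟨Wheel.treeA_conn hk hvals' hone', Wheel.treeA_acyclic hk hvals' hone'⟩
  -- treeB is a solution
  have hBmem : IsCoupledTree k (Wheel.treeB k d) ∧
      ∀ i : ZMod k, valOf (Wheel.treeB k d) (some i) = d i := by
    refine ⟨⟨Wheel.treeB_sub, ⟨Wheel.treeB_conn hk hvals hone, Wheel.treeB_acyclic hk hvals hone⟩,
      ?_⟩, fun i => Wheel.treeB_val hk hvals i⟩
    rw [Wheel.treeB_compl hk hvals]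
    exact ⟨Wheel.treeB_conn hk hvals' hone', Wheel.treeB_acyclic hk hvals' hone'⟩
  -- the solution set is exactly the pair
  have hset : {T : Set (Sym2 (Option (ZMod k))) |
      IsCoupledTree k T ∧ ∀ i : ZMod k, valOf T (some i) = d i}
      = {Wheel.treeA k d, Wheel.treeB k d} := by
    ext T
    constructor
    · rintro ⟨⟨hsub, htree, htree'⟩, hval⟩
      have hS : Wheel.Sol k T d :=
        ⟨hsub, htree.1, htree'.1, hvals,
          fun i => (Wheel.val_decomp hk hsub i).symm.trans (hval i)⟩
      rcases Wheel.unique hk hS with hA | hB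
      · exact Or.inl (Wheel.eq_treeA hk hS hA)
      · exact Or.inr (Wheel.eq_treeB hk hS hB)
    · rintro (rfl | rfl)
      · exact hAmem
      · exact hBmem
  rw [hset]
  refine Set.ncard_pair ?_
  obtain ⟨t, ht⟩ := Wheel.exists_step hk ⟨i₀, j₀, hij₀⟩
  intro hcon
  have h1 : Wheel.rim k t ∈ Wheel.treeA k d ↔ d t = 2 := Wheel.rim_mem_treeA_iff hk
  have h2 : Wheel.rim k t ∈ Wheel.treeB k d ↔ d (t + 1) = 2 := Wheel.rim_mem_treeB_iff hk
  rw [hcon] at h1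
  have h3 := hvals t
  have h4 := hvals (t + 1)
  by_cases hm : Wheel.rim k t ∈ Wheel.treeB k d
  · have ha := h1.mp hm
    have hb := h2.mp hm
    omega
  · have ha : d t ≠ 2 := fun h => hm (h1.mpr h)
    have hb : d (t + 1) ≠ 2 := fun h => hm (h2.mpr h)
    omega
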